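/- For a fibrewise pointed space X over B, cat_B^*(X) ≤ TC_B(X) ≤ cat_B^*(X ×_B X). -/

import Mathlib

open scoped unitInterval

variable {B X Y Z X' Y' : Type*} [TopologicalSpace B] [TopologicalSpace X]
  [TopologicalSpace Y] [TopologicalSpace Z] [TopologicalSpace X'] [TopologicalSpace Y']

/-- `f` and `g` are fibrewise homotopic over `B` on the subset `U ⊆ X`:
there is a homotopy `H` from `f|U` to `g|U` each of whose stages is fibrewise. -/
def FibHomotopicOn (pX : X → B) (pY : Y → B) (f g : X → Y) (U : Set X) : Prop :=
  ∃ H : C(U × unitInterval, Y),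
    (∀ u : U, H (u, 0) = f u) ∧ (∀ u : U, H (u, 1) = g u) ∧
    (∀ (u : U) (t : unitInterval), pY (H (u, t)) = pX u)

/-- The parametrized (fibrewise) homotopic distance `D_B(f,g)`: the least `n`
such that `X` has an open cover by `n+1` sets on each of which `f` and `g` are
fibrewise homotopic (`∞` if there is no such cover). -/
noncomputable def fibDist (pX : X → B) (pY : Y → B) (f g : X → Y) : ℕ∞ :=
  sInf ((fun n : ℕ => (n : ℕ∞)) ''
    {n : ℕ | ∃ U : Fin (n + 1) → Set X,
      (∀ i, IsOpen (U i)) ∧ (⋃ i, U i) = Set.univ ∧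
      ∀ i, FibHomotopicOn pX pY f g (U i)})

lemma FibHomotopicOn.symm {pX : X → B} {pY : Y → B} {f g : X → Y} {U : Set X}
    (h : FibHomotopicOn pX pY f g U) : FibHomotopicOn pX pY g f U := by
  obtain ⟨H, h0, h1, hf⟩ := h
  refine ⟨H.comp ⟨fun p => (p.1, unitInterval.symm p.2),
    continuous_fst.prodMk (unitInterval.continuous_symm.comp continuous_snd)⟩,
    fun u => ?_, fun u => ?_, fun u t => ?_⟩
  · simpa using h1 u
  · simpa using h0 u
  · exact hf u _

lemma FibHomotopicOn.trans {pX : X → B} {pY : Y → B} {f g h : X → Y} {U : Set X}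
    (hfg : FibHomotopicOn pX pY f g U) (hgh : FibHomotopicOn pX pY g h U) :
    FibHomotopicOn pX pY f h U := by
  obtain ⟨H1, H10, H11, H1f⟩ := hfg
  obtain ⟨H2, H20, H21, H2f⟩ := hgh
  let F0 : C(U, Y) := ⟨fun u => H1 (u, 0),
    H1.continuous.comp (continuous_id.prodMk continuous_const)⟩
  let F1 : C(U, Y) := ⟨fun u => H1 (u, 1),
    H1.continuous.comp (continuous_id.prodMk continuous_const)⟩
  let F2 : C(U, Y) := ⟨fun u => H2 (u, 1),
    H2.continuous.comp (continuous_id.prodMk continuous_const)⟩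
  let G1 : ContinuousMap.Homotopy F0 F1 :=
    { toFun := fun p => H1 (p.2, p.1)
      continuous_toFun := H1.continuous.comp (continuous_snd.prodMk continuous_fst)
      map_zero_left := fun u => rfl
      map_one_left := fun u => rfl }
  let G2 : ContinuousMap.Homotopy F1 F2 :=
    { toFun := fun p => H2 (p.2, p.1)
      continuous_toFun := H2.continuous.comp (continuous_snd.prodMk continuous_fst)
      map_zero_left := fun u => (H20 u).trans (H11 u).symm
      map_one_left := fun u => rfl }
  let G := G1.trans G2
  refine ⟨⟨fun p => G (p.2, p.1), G.continuous.comp (continuous_snd.prodMk continuous_fst)⟩,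
    fun u => ?_, fun u => ?_, fun u t => ?_⟩
  · show G (0, u) = f u
    rw [ContinuousMap.Homotopy.apply_zero]
    exact H10 u
  · show G (1, u) = h u
    rw [ContinuousMap.Homotopy.apply_one]
    exact H21 u
  · show pY (G (t, u)) = pX u
    rw [ContinuousMap.Homotopy.trans_apply]
    split
    · exact H1f u _
    · exact H2f u _

lemma FibHomotopicOn.comp_left {pZ : Z → B} {pY : Y → B} {pX' : X' → B}
    {f g : Z → Y} {φ : X' → Z} (hφ : Continuous φ) (hfib : ∀ x, pZ (φ x) = pX' x)
    {U : Set Z} (h : FibHomotopicOn pZ pY f g U) :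
    FibHomotopicOn pX' pY (f ∘ φ) (g ∘ φ) (φ ⁻¹' U) := by
  obtain ⟨H, h0, h1, hf⟩ := h
  refine ⟨H.comp ⟨fun p => (⟨φ p.1.1, p.1.2⟩, p.2),
    (((hφ.comp continuous_subtype_val).comp continuous_fst).subtype_mk _).prodMk
      continuous_snd⟩, fun u => h0 _, fun u => h1 _, fun u t => (hf _ t).trans (hfib _)⟩

lemma FibHomotopicOn.comp_right {pX : X → B} {pY : Y → B} {pY' : Y' → B}
    {f g : X → Y} {k : Y → Y'} (hk : Continuous k) (hfib : ∀ y, pY' (k y) = pY y)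
    {U : Set X} (h : FibHomotopicOn pX pY f g U) :
    FibHomotopicOn pX pY' (k ∘ f) (k ∘ g) U := by
  obtain ⟨H, h0, h1, hf⟩ := h
  exact ⟨⟨fun p => k (H p), hk.comp H.continuous⟩,
    fun u => by simp only [ContinuousMap.coe_mk, Function.comp_apply, h0],
    fun u => by simp only [ContinuousMap.coe_mk, Function.comp_apply, h1],
    fun u t => (hfib _).trans (hf u t)⟩

theorem fibCat_le_fibTC_le_fibCat_prod (pX : X → B) (sX : B → X)
    (hpX : Continuous pX) (hsX : Continuous sX) (hsec : ∀ b, pX (sX b) = b) :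
    fibDist pX pX id (fun x => sX (pX x)) ≤
        fibDist (fun z : {z : X × X // pX z.1 = pX z.2} => pX z.val.1) pX
          (fun z => z.val.1) (fun z => z.val.2) ∧
      fibDist (fun z : {z : X × X // pX z.1 = pX z.2} => pX z.val.1) pX
          (fun z => z.val.1) (fun z => z.val.2) ≤
        fibDist (fun z : {z : X × X // pX z.1 = pX z.2} => pX z.val.1)
          (fun z : {z : X × X // pX z.1 = pX z.2} => pX z.val.1) id
          (fun z => (⟨(sX (pX z.val.1), sX (pX z.val.1)), rfl⟩ :
            {z : X × X // pX z.1 = pX z.2})) := by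
  constructor
  · -- cat ≤ TC, pulling back along i₂ : x ↦ (sX (pX x), x)
    apply sInf_le_sInf
    apply Set.image_mono
    rintro n ⟨U, hU1, hU2, hU3⟩
    set φ : X → {z : X × X // pX z.1 = pX z.2} :=
      fun x => ⟨(sX (pX x), x), hsec (pX x)⟩ with hφdef
    have hφ : Continuous φ := (((hsX.comp hpX).prodMk continuous_id).subtype_mk _)
    have hfib : ∀ x, pX ((φ x).val.1) = pX x := fun x => hsec (pX x)
    refine ⟨fun i => φ ⁻¹' U i, fun i => (hU1 i).preimage hφ, ?_, fun i => ?_⟩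
    · rw [← Set.preimage_iUnion, hU2, Set.preimage_univ]
    · exact ((hU3 i).comp_left hφ hfib).symm
  · -- TC ≤ cat of the product
    apply sInf_le_sInf
    apply Set.image_mono
    rintro n ⟨U, hU1, hU2, hU3⟩
    refine ⟨U, hU1, hU2, fun i => ?_⟩
    have h1 := (hU3 i).comp_right (k := fun z : {z : X × X // pX z.1 = pX z.2} => z.val.1)
      (continuous_fst.comp continuous_subtype_val) (fun z => rfl)
    have h2 := (hU3 i).comp_right (k := fun z : {z : X × X // pX z.1 = pX z.2} => z.val.2)
      (continuous_snd.comp continuous_subtype_val) (fun z => z.prop.symm)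
    exact FibHomotopicOn.trans
      (g := fun z : {z : X × X // pX z.1 = pX z.2} => sX (pX z.val.1)) h1 h2.symm
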